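/- In the del Pezzo lattice of rank 9 (δ = 8): if (Q₁, Q₂) and (Q₁′, Q₂′) are ordered pairs of conic classes with Q₁·Q₂ = Q₁′·Q₂′ and Q₁·Q₂ ≠ 4, then there exists an element g of the Weyl group W₈ with g(Q₁) = Q₁′ and g(Q₂) = Q₂′. -/

import Mathlib

/-- A class in the del Pezzo lattice of rank `1 + δ`: the pair `(a, b)`
represents `a·ℓ − b₁e₁ − ⋯ − b_δ e_δ`. -/
abbrev Cls (δ : ℕ) : Type := ℤ × (Fin δ → ℤ)

/-- The intersection product: `(a;b)·(a';b') = a a' − Σ bᵢ bᵢ'`. -/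
def ip {δ : ℕ} (x y : Cls δ) : ℤ := x.1 * y.1 - ∑ i, x.2 i * y.2 i

/-- The canonical class `K = −3ℓ + e₁ + ⋯ + e_δ`, i.e. `(−3; −1, …, −1)`. -/
def Kcls (δ : ℕ) : Cls δ := (-3, fun _ => -1)

/-- A conic class: `Q·Q = 0` and `K·Q = −2`. -/
def IsConic {δ : ℕ} (Q : Cls δ) : Prop := ip Q Q = 0 ∧ ip (Kcls δ) Q = -2

/-- A `(−1)`-class: `L·L = −1` and `K·L = −1`. -/
def IsMinusOne {δ : ℕ} (L : Cls δ) : Prop := ip L L = -1 ∧ ip (Kcls δ) L = -1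

/-- Membership in the Weyl group `W_δ`: a ℤ-linear automorphism of the lattice
preserving the intersection form and fixing the canonical class. -/
def IsWeyl {δ : ℕ} (g : Cls δ ≃ₗ[ℤ] Cls δ) : Prop :=
  (∀ x y : Cls δ, ip (g x) (g y) = ip x y) ∧ g (Kcls δ) = Kcls δ

namespace DP

lemma ip_comm {δ : ℕ} (x y : Cls δ) : ip x y = ip y x := by
  simp [ip, mul_comm]

lemma ip_add_left {δ : ℕ} (x y z : Cls δ) : ip (x + y) z = ip x z + ip y z := by
  simp [ip, Prod.fst_add, Prod.snd_add, Pi.add_apply, add_mul, Finset.sum_add_distrib]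
  ring

lemma ip_smul_left {δ : ℕ} (c : ℤ) (x z : Cls δ) : ip (c • x) z = c * ip x z := by
  simp [ip, Prod.smul_fst, Prod.smul_snd, Pi.smul_apply, smul_eq_mul, mul_assoc,
    mul_assoc]
  rw [mul_sub, Finset.mul_sum]

lemma ip_add_right {δ : ℕ} (x y z : Cls δ) : ip x (y + z) = ip x y + ip x z := by
  rw [ip_comm, ip_add_left, ip_comm y x, ip_comm z x]

lemma ip_smul_right {δ : ℕ} (c : ℤ) (x z : Cls δ) : ip x (c • z) = c * ip x z := by
  rw [ip_comm, ip_smul_left, ip_comm]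

/-- `ip · r` as a linear map. -/
def ipL {δ : ℕ} (r : Cls δ) : Cls δ →ₗ[ℤ] ℤ where
  toFun x := ip x r
  map_add' x y := ip_add_left x y r
  map_smul' c x := ip_smul_left c x r

/-- reflection in `r` as a linear map -/
def reflMap {δ : ℕ} (r : Cls δ) : Cls δ →ₗ[ℤ] Cls δ :=
  LinearMap.id + (ipL r).smulRight r

lemma reflMap_apply {δ : ℕ} (r x : Cls δ) : reflMap r x = x + (ip x r) • r := rfl

lemma reflMap_invol {δ : ℕ} (r : Cls δ) (hr : ip r r = -2) :
    Function.Involutive (reflMap r) := by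
  intro x
  simp only [reflMap_apply, ip_add_left, ip_smul_left, hr]
  rw [add_assoc, ← add_smul]
  have h : ip x r + (ip x r + ip x r * -2) = 0 := by ring
  rw [h, zero_smul, add_zero]

/-- reflection in a root as a linear equivalence -/
def reflEquiv {δ : ℕ} (r : Cls δ) (hr : ip r r = -2) : Cls δ ≃ₗ[ℤ] Cls δ :=
  LinearEquiv.ofInvolutive (reflMap r) (reflMap_invol r hr)

lemma reflEquiv_apply {δ : ℕ} (r : Cls δ) (hr : ip r r = -2) (x : Cls δ) :
    reflEquiv r hr x = x + (ip x r) • r := rfl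

lemma isWeyl_reflEquiv {δ : ℕ} (r : Cls δ) (hr : ip r r = -2)
    (hK : ip (Kcls δ) r = 0) : IsWeyl (reflEquiv r hr) := by
  constructor
  · intro x y
    simp only [reflEquiv_apply, ip_add_left, ip_add_right, ip_smul_left, ip_smul_right, hr]
    rw [ip_comm r y]
    ring
  · simp [reflEquiv_apply, hK]


lemma isWeyl_refl {δ : ℕ} : IsWeyl (LinearEquiv.refl ℤ (Cls δ)) := by
  constructor <;> simp

lemma isWeyl_trans {δ : ℕ} {g h : Cls δ ≃ₗ[ℤ] Cls δ} (hg : IsWeyl g) (hh : IsWeyl h) :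
    IsWeyl (g.trans h) := by
  refine ⟨fun x y => ?_, ?_⟩
  · simp only [LinearEquiv.trans_apply, hh.1, hg.1]
  · simp only [LinearEquiv.trans_apply, hg.2, hh.2]

lemma isWeyl_symm {δ : ℕ} {g : Cls δ ≃ₗ[ℤ] Cls δ} (hg : IsWeyl g) : IsWeyl g.symm := by
  refine ⟨fun x y => ?_, ?_⟩
  · conv_rhs => rw [← g.apply_symm_apply x, ← g.apply_symm_apply y]
    rw [hg.1]
  · rw [LinearEquiv.symm_apply_eq, hg.2]

lemma isConic_map {δ : ℕ} {g : Cls δ ≃ₗ[ℤ] Cls δ} (hg : IsWeyl g) {Q : Cls δ}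
    (hQ : IsConic Q) : IsConic (g Q) := by
  refine ⟨by rw [hg.1]; exact hQ.1, ?_⟩
  · rw [← hg.2, hg.1]; exact hQ.2

/-- coordinate permutation as a Weyl element -/
def permEquiv {δ : ℕ} (π : Equiv.Perm (Fin δ)) : Cls δ ≃ₗ[ℤ] Cls δ where
  toFun x := (x.1, x.2 ∘ π)
  invFun x := (x.1, x.2 ∘ π.symm)
  map_add' x y := rfl
  map_smul' c x := rfl
  left_inv x := by
    refine Prod.ext rfl (funext fun i => ?_)
    simp
  right_inv x := by
    refine Prod.ext rfl (funext fun i => ?_)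
    simp

lemma permEquiv_apply {δ : ℕ} (π : Equiv.Perm (Fin δ)) (x : Cls δ) :
    permEquiv π x = (x.1, x.2 ∘ π) := rfl

lemma isWeyl_permEquiv {δ : ℕ} (π : Equiv.Perm (Fin δ)) : IsWeyl (permEquiv π) := by
  refine ⟨fun x y => ?_, rfl⟩
  simp only [permEquiv_apply, ip, Function.comp_apply]
  rw [Equiv.sum_comp π (fun i => x.2 i * y.2 i)]


lemma ip_sub_left {δ : ℕ} (x y z : Cls δ) : ip (x - y) z = ip x z - ip y z := by
  rw [sub_eq_add_neg, ip_add_left, ← neg_one_smul ℤ y, ip_smul_left]; ring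

lemma ip_sub_right {δ : ℕ} (x y z : Cls δ) : ip x (y - z) = ip x y - ip x z := by
  rw [ip_comm, ip_sub_left, ip_comm y x, ip_comm z x]

lemma conic_sum {Q : Cls 8} (hQ : IsConic Q) : ∑ i, Q.2 i = 3 * Q.1 - 2 := by
  have h := hQ.2
  simp only [ip, Kcls, neg_one_mul, Finset.sum_neg_distrib] at h
  linarith

lemma conic_sumsq {Q : Cls 8} (hQ : IsConic Q) : ∑ i, Q.2 i * Q.2 i = Q.1 * Q.1 := by
  have h := hQ.1
  simp only [ip] at h
  linarith

lemma cs8 (d : Fin 8 → ℤ) : (∑ i, d i) ^ 2 ≤ 8 * ∑ i, (d i) ^ 2 := by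
  have := sq_sum_le_card_mul_sum_sq (s := (Finset.univ : Finset (Fin 8))) (f := d)
  simpa using this

lemma conic_a_pos {Q : Cls 8} (hQ : IsConic Q) : 1 ≤ Q.1 := by
  have h1 := conic_sum hQ
  have h2 := conic_sumsq hQ
  have h3 := cs8 Q.2
  have h4 : ∑ i, (Q.2 i)^2 = ∑ i, Q.2 i * Q.2 i := by
    refine Finset.sum_congr rfl fun i _ => sq (Q.2 i) ▸ by ring
  rw [h4, h2, h1] at h3
  nlinarith

lemma conic_b_nonneg {Q : Cls 8} (hQ : IsConic Q) (i : Fin 8) : 0 ≤ Q.2 i := by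
  by_contra hneg
  push_neg at hneg
  have hx : Q.2 i ≤ -1 := by omega
  have ha := conic_a_pos hQ
  have h1 := conic_sum hQ
  have h2 := conic_sumsq hQ
  have hmem : i ∈ (Finset.univ : Finset (Fin 8)) := Finset.mem_univ i
  have e1 : Q.2 i + ∑ j ∈ Finset.univ.erase i, Q.2 j = ∑ j, Q.2 j :=
    Finset.add_sum_erase _ _ hmem
  have e2 : (Q.2 i)^2 + ∑ j ∈ Finset.univ.erase i, (Q.2 j)^2 = ∑ j, (Q.2 j)^2 :=
    Finset.add_sum_erase _ (fun j => (Q.2 j)^2) hmem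
  have hcs := sq_sum_le_card_mul_sum_sq (s := Finset.univ.erase i) (f := Q.2)
  have hcard : (Finset.univ.erase i).card = 7 := by
    rw [Finset.card_erase_of_mem hmem]; simp
  rw [hcard] at hcs
  have h4 : ∑ j, (Q.2 j)^2 = ∑ j, Q.2 j * Q.2 j := by
    refine Finset.sum_congr rfl fun j _ => sq (Q.2 j) ▸ by ring
  rw [h4, h2] at e2
  rw [h1] at e1
  push_cast at hcs
  nlinarith [sq_nonneg (Q.2 i + 1), sq_nonneg (2*Q.1 - 3),
    mul_nonneg (by linarith : (0:ℤ) ≤ 12 + 6*Q.1) (by linarith : (0:ℤ) ≤ -(Q.2 i + 1))]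

lemma conic_b_le {Q : Cls 8} (hQ : IsConic Q) (i : Fin 8) : Q.2 i ≤ Q.1 := by
  have h2 := conic_sumsq hQ
  have hle : Q.2 i * Q.2 i ≤ ∑ j, Q.2 j * Q.2 j :=
    Finset.single_le_sum (f := fun j => Q.2 j * Q.2 j)
      (fun j _ => mul_self_nonneg _) (Finset.mem_univ i)
  rw [h2] at hle
  have := conic_a_pos hQ
  have := conic_b_nonneg hQ i
  nlinarith

/-- negative semidefiniteness on `K^⊥` -/
lemma nsd {z : Cls 8} (hz : ip (Kcls 8) z = 0) : ip z z ≤ 0 := by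
  simp only [ip, Kcls, neg_one_mul, Finset.sum_neg_distrib] at hz ⊢
  have h3 := cs8 z.2
  have h4 : ∑ i, (z.2 i)^2 = ∑ i, z.2 i * z.2 i := by
    refine Finset.sum_congr rfl fun i _ => sq (z.2 i) ▸ by ring
  rw [h4] at h3
  have hsum : ∑ i, z.2 i = 3 * z.1 := by linarith
  rw [hsum] at h3
  nlinarith [sq_nonneg z.1]

lemma nsd_eq {z : Cls 8} (hz : ip (Kcls 8) z = 0) (h0 : ip z z = 0) : z = 0 := by
  simp only [ip, Kcls, neg_one_mul, Finset.sum_neg_distrib] at hz h0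
  have h3 := cs8 z.2
  have h4 : ∑ i, (z.2 i)^2 = ∑ i, z.2 i * z.2 i := by
    refine Finset.sum_congr rfl fun i _ => sq (z.2 i) ▸ by ring
  rw [h4] at h3
  have hsum : ∑ i, z.2 i = 3 * z.1 := by linarith
  rw [hsum] at h3
  have hc : z.1 = 0 := by nlinarith [sq_nonneg z.1]
  have hsq : ∑ i, z.2 i * z.2 i = 0 := by nlinarith
  have hall : ∀ i ∈ (Finset.univ : Finset (Fin 8)), z.2 i * z.2 i = 0 := by
    rw [← Finset.sum_eq_zero_iff_of_nonneg (fun i _ => mul_self_nonneg (z.2 i))]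
    exact hsq
  refine Prod.ext hc (funext fun i => ?_)
  have := hall i (Finset.mem_univ i)
  exact mul_self_eq_zero.mp this

lemma ipKK : ip (Kcls 8) (Kcls 8) = 1 := by decide

lemma pair_nonneg {Q Q' : Cls 8} (hQ : IsConic Q) (hQ' : IsConic Q') : 0 ≤ ip Q Q' := by
  have hz : ip (Kcls 8) (Q - Q') = 0 := by rw [ip_sub_right, hQ.2, hQ'.2]; ring
  have := nsd hz
  rw [ip_sub_left, ip_sub_right, ip_sub_right, hQ.1, hQ'.1, ip_comm Q' Q] at this
  linarith

lemma pair_le_eight {Q Q' : Cls 8} (hQ : IsConic Q) (hQ' : IsConic Q') : ip Q Q' ≤ 8 := by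
  have hz : ip (Kcls 8) (Q + Q' + (4 : ℤ) • Kcls 8) = 0 := by
    rw [ip_add_right, ip_add_right, ip_smul_right, hQ.2, hQ'.2, ipKK]; ring
  have hQK : ip Q (Kcls 8) = -2 := by rw [ip_comm]; exact hQ.2
  have hQ'K : ip Q' (Kcls 8) = -2 := by rw [ip_comm]; exact hQ'.2
  have := nsd hz
  simp only [ip_add_left, ip_add_right, ip_smul_left, ip_smul_right, hQ.1, hQ'.1, ipKK,
    hQK, hQ'K, hQ.2, hQ'.2] at this
  rw [ip_comm Q' Q] at this
  linarith

lemma pair_eq_zero {Q Q' : Cls 8} (hQ : IsConic Q) (hQ' : IsConic Q')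
    (h : ip Q Q' = 0) : Q = Q' := by
  have hz : ip (Kcls 8) (Q - Q') = 0 := by rw [ip_sub_right, hQ.2, hQ'.2]; ring
  have h0 : ip (Q - Q') (Q - Q') = 0 := by
    rw [ip_sub_left, ip_sub_right, ip_sub_right, hQ.1, hQ'.1, ip_comm Q' Q, h]; ring
  have := nsd_eq hz h0
  have : Q - Q' = 0 := this
  linear_combination (norm := module) this


/-- the standard conic `ℓ - e₀` -/
def C1 : Cls 8 := (1, fun i => if i = 0 then 1 else 0)

lemma isConic_C1 : IsConic C1 := by constructor <;> decide

lemma key3 (a x0 x1 x2 x3 x4 x5 x6 x7 : ℤ)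
    (h01 : x0 ≤ x1) (h12 : x1 ≤ x2) (h23 : x2 ≤ x3) (h34 : x3 ≤ x4) (h45 : x4 ≤ x5)
    (h56 : x5 ≤ x6) (h67 : x6 ≤ x7) (hnn : 0 ≤ x0) (ha : 2 ≤ a) (h7a : x7 ≤ a)
    (hsum : x0+x1+x2+x3+x4+x5+x6+x7 = 3*a-2)
    (hsq : x0*x0+x1*x1+x2*x2+x3*x3+x4*x4+x5*x5+x6*x6+x7*x7 = a*a) :
    a + 1 ≤ x5 + x6 + x7 := by
  by_contra hcon
  push_neg at hcon
  have hs : x5 + x6 + x7 ≤ a := by omega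
  have hn0 : 0 ≤ x0 := hnn
  have hn1 : 0 ≤ x1 := by omega
  have hn2 : 0 ≤ x2 := by omega
  have hn3 : 0 ≤ x3 := by omega
  have hn4 : 0 ≤ x4 := by omega
  have hn5 : 0 ≤ x5 := by omega
  rcases le_or_gt x7 (a-1) with hc | hc
  · have P0 : 0 ≤ x0*(x5-x0) := mul_nonneg hn0 (by omega)
    have P1 : 0 ≤ x1*(x5-x1) := mul_nonneg hn1 (by omega)
    have P2 : 0 ≤ x2*(x5-x2) := mul_nonneg hn2 (by omega)
    have P3 : 0 ≤ x3*(x5-x3) := mul_nonneg hn3 (by omega)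
    have P4 : 0 ≤ x4*(x5-x4) := mul_nonneg hn4 (by omega)
    have B' : 0 ≤ (x7-x6)*(x6-x5) := mul_nonneg (by omega) (by omega)
    have C' : 0 ≤ (x6+x7-2*x5)*(3*a-2-3*x7) := mul_nonneg (by omega) (by omega)
    have D' : 0 ≤ (a-(x5+x6+x7))*(3*a-2) := mul_nonneg (by omega) (by omega)
    have hid : 2*a + (a-(x5+x6+x7))*(3*a-2) + (x6+x7-2*x5)*(3*a-2-3*x7)
        + 3*((x7-x6)*(x6-x5))
        + 3*(x0*(x5-x0)+x1*(x5-x1)+x2*(x5-x2)+x3*(x5-x3)+x4*(x5-x4)) = 0 := by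
      linear_combination (-3 : ℤ)*hsq + (3*x5)*hsum
    linarith
  · have h7 : x7 = a := by omega
    have hx6 : 1 ≤ x6 := by omega
    have q0 : 0 ≤ x0*x0 := mul_self_nonneg _
    have q1 : 0 ≤ x1*x1 := mul_self_nonneg _
    have q2 : 0 ≤ x2*x2 := mul_self_nonneg _
    have q3 : 0 ≤ x3*x3 := mul_self_nonneg _
    have q4 : 0 ≤ x4*x4 := mul_self_nonneg _
    have q5 : 0 ≤ x5*x5 := mul_self_nonneg _
    have q6 : 1*x6 ≤ x6*x6 := mul_le_mul_of_nonneg_right hx6 (by omega)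
    subst h7
    linarith

lemma exists_three {Q : Cls 8} (hQ : IsConic Q) (ha : 2 ≤ Q.1) :
    ∃ i j k : Fin 8, i ≠ j ∧ i ≠ k ∧ j ≠ k ∧ Q.1 + 1 ≤ Q.2 i + Q.2 j + Q.2 k := by
  set σ := Tuple.sort Q.2 with hσ
  have hm : Monotone (Q.2 ∘ σ) := Tuple.monotone_sort Q.2
  have hs : ∑ m, Q.2 (σ m) = ∑ m, Q.2 m := Equiv.sum_comp σ Q.2
  have hs2 : ∑ m, Q.2 (σ m) * Q.2 (σ m) = ∑ m, Q.2 m * Q.2 m :=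
    Equiv.sum_comp σ (fun m => Q.2 m * Q.2 m)
  have h1 := conic_sum hQ
  have h2 := conic_sumsq hQ
  rw [h1] at hs
  rw [h2] at hs2
  rw [Fin.sum_univ_eight] at hs hs2
  have key := key3 Q.1 (Q.2 (σ 0)) (Q.2 (σ 1)) (Q.2 (σ 2)) (Q.2 (σ 3)) (Q.2 (σ 4))
    (Q.2 (σ 5)) (Q.2 (σ 6)) (Q.2 (σ 7))
    (hm (by decide : (0:Fin 8) ≤ 1)) (hm (by decide : (1:Fin 8) ≤ 2))
    (hm (by decide : (2:Fin 8) ≤ 3)) (hm (by decide : (3:Fin 8) ≤ 4))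
    (hm (by decide : (4:Fin 8) ≤ 5)) (hm (by decide : (5:Fin 8) ≤ 6))
    (hm (by decide : (6:Fin 8) ≤ 7)) (conic_b_nonneg hQ _) ha (conic_b_le hQ _)
    hs hs2
  exact ⟨σ 5, σ 6, σ 7, σ.injective.ne (by decide), σ.injective.ne (by decide),
    σ.injective.ne (by decide), key⟩


lemma sum_ind (f : Fin 8 → ℤ) (i j k : Fin 8) (hij : i ≠ j) (hik : i ≠ k) (hjk : j ≠ k) :
    ∑ m, f m * (if m ∈ ({i, j, k} : Finset (Fin 8)) then (1:ℤ) else 0) = f i + f j + f k := by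
  simp only [mul_ite, mul_one, mul_zero]
  rw [Finset.sum_ite_mem, Finset.univ_inter,
    Finset.sum_insert (by simp [hij, hik]),
    Finset.sum_insert (by simp [hjk]), Finset.sum_singleton]
  ring

/-- the root `ℓ - e_i - e_j - e_k` -/
def root3 (i j k : Fin 8) : Cls 8 :=
  (1, fun m => if m ∈ ({i, j, k} : Finset (Fin 8)) then (1:ℤ) else 0)

lemma root3_self {i j k : Fin 8} (hij : i ≠ j) (hik : i ≠ k) (hjk : j ≠ k) :
    ip (root3 i j k) (root3 i j k) = -2 := by
  have h := sum_ind (fun m => if m ∈ ({i, j, k} : Finset (Fin 8)) then (1:ℤ) else 0)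
    i j k hij hik hjk
  simp only [ip, root3, one_mul]
  rw [h]
  simp [hij, hik, hjk]

lemma root3_K {i j k : Fin 8} (hij : i ≠ j) (hik : i ≠ k) (hjk : j ≠ k) :
    ip (Kcls 8) (root3 i j k) = 0 := by
  have h := sum_ind (fun _ => (-1 : ℤ)) i j k hij hik hjk
  simp only [ip, Kcls, root3]
  rw [h]
  ring

lemma root3_ip {i j k : Fin 8} (Q : Cls 8) (hij : i ≠ j) (hik : i ≠ k) (hjk : j ≠ k) :
    ip Q (root3 i j k) = Q.1 - (Q.2 i + Q.2 j + Q.2 k) := by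
  have h := sum_ind Q.2 i j k hij hik hjk
  simp only [ip, root3, mul_one]
  rw [h]

lemma norm_conic_aux : ∀ (n : ℕ) (Q : Cls 8), IsConic Q → Q.1.toNat = n →
    ∃ g : Cls 8 ≃ₗ[ℤ] Cls 8, IsWeyl g ∧ g Q = C1 := by
  intro n
  induction n using Nat.strong_induction_on with
  | _ n IH =>
  intro Q hQ hn
  have ha := conic_a_pos hQ
  have hsum := conic_sum hQ
  have hsq := conic_sumsq hQ
  rcases eq_or_lt_of_le ha with h1 | h2
  · -- Q.1 = 1
    have hS : ∑ m, Q.2 m = 1 := by rw [hsum]; omega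
    obtain ⟨i, _, hi⟩ := Finset.exists_ne_zero_of_sum_ne_zero (by rw [hS]; norm_num :
      ∑ m, Q.2 m ≠ 0)
    have hi1 : 1 ≤ Q.2 i := by
      have := conic_b_nonneg hQ i; omega
    have herase : ∑ m ∈ Finset.univ.erase i, Q.2 m = 1 - Q.2 i := by
      have := Finset.add_sum_erase Finset.univ Q.2 (Finset.mem_univ i)
      omega
    have hz : ∀ j, j ≠ i → Q.2 j = 0 := by
      intro j hj
      have hle : Q.2 j ≤ ∑ m ∈ Finset.univ.erase i, Q.2 m :=
        Finset.single_le_sum (f := Q.2) (fun m _ => conic_b_nonneg hQ m)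
          (Finset.mem_erase.mpr ⟨hj, Finset.mem_univ j⟩)
      have := conic_b_nonneg hQ j
      omega
    have hbi : Q.2 i = 1 := by
      have h0 : ∑ m ∈ Finset.univ.erase i, Q.2 m = 0 :=
        Finset.sum_eq_zero (fun m hm => hz m (Finset.mem_erase.mp hm).1)
      omega
    refine ⟨permEquiv (Equiv.swap 0 i), isWeyl_permEquiv _, ?_⟩
    refine Prod.ext (by simpa [permEquiv_apply, C1] using h1.symm) (funext fun m => ?_)
    show Q.2 (Equiv.swap 0 i m) = C1.2 m
    by_cases hm : m = 0
    · subst hm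
      simp [Equiv.swap_apply_left, hbi, C1]
    · have hne : Equiv.swap 0 i m ≠ i := by
        intro hc
        exact hm ((Equiv.swap 0 i).injective (by rw [hc, Equiv.swap_apply_left]))
      rw [hz _ hne]
      simp [C1, hm]
  · -- 2 ≤ Q.1
    obtain ⟨i, j, k, hij, hik, hjk, hs3⟩ := exists_three hQ h2
    have hrr := root3_self hij hik hjk
    have hKr := root3_K hij hik hjk
    have hQr := root3_ip Q hij hik hjk
    set g1 := reflEquiv (root3 i j k) hrr with hg1
    have hw1 := isWeyl_reflEquiv (root3 i j k) hrr hKr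
    have hQ' : IsConic (g1 Q) := isConic_map hw1 hQ
    have hfst : (g1 Q).1 = Q.1 + ip Q (root3 i j k) := by
      show (Q + ip Q (root3 i j k) • root3 i j k).1 = _
      simp [root3, Prod.fst_add, Prod.smul_fst, smul_eq_mul]
    have hlt : (g1 Q).1 < Q.1 := by
      rw [hfst, hQr]; omega
    have hpos := conic_a_pos hQ'
    obtain ⟨g2, hw2, hg2⟩ := IH (g1 Q).1.toNat (by omega) (g1 Q) hQ' rfl
    exact ⟨g1.trans g2, isWeyl_trans hw1 hw2, by
      rw [LinearEquiv.trans_apply, hg2]⟩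

lemma norm_conic (Q : Cls 8) (hQ : IsConic Q) :
    ∃ g : Cls 8 ≃ₗ[ℤ] Cls 8, IsWeyl g ∧ g Q = C1 :=
  norm_conic_aux Q.1.toNat Q hQ rfl


/-- lift a permutation of `Fin 7` to one of `Fin 8` fixing `0` -/
def liftPerm (σ : Equiv.Perm (Fin 7)) : Equiv.Perm (Fin 8) :=
  ((finSuccEquiv 7).symm.permCongr) σ.optionCongr

lemma liftPerm_zero (σ : Equiv.Perm (Fin 7)) : liftPerm σ 0 = 0 := by
  simp [liftPerm, Equiv.permCongr_apply]

lemma liftPerm_succ (σ : Equiv.Perm (Fin 7)) (m : Fin 7) :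
    liftPerm σ m.succ = (σ m).succ := by
  simp [liftPerm, Equiv.permCongr_apply]

lemma exists_perm_finset {k : ℕ} (S T : Finset (Fin k)) (h : T.card = S.card) :
    ∃ σ : Equiv.Perm (Fin k), ∀ j, σ j ∈ S ↔ j ∈ T := by
  classical
  have e : {x // x ∈ T} ≃ {x // x ∈ S} := Finset.equivOfCardEq h
  refine ⟨Equiv.extendSubtype e, fun j => ?_⟩
  by_cases hj : j ∈ T
  · exact iff_of_true (Equiv.extendSubtype_mem e j hj) hj
  · exact iff_of_false (Equiv.extendSubtype_not_mem e j hj) hj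

lemma ip_C1 (Q : Cls 8) : ip C1 Q = Q.1 - Q.2 0 := by
  simp [ip, C1, ite_mul, Finset.sum_ite_eq]

lemma permEquiv_lift_C1 (σ : Equiv.Perm (Fin 7)) : permEquiv (liftPerm σ) C1 = C1 := by
  refine Prod.ext rfl (funext fun m => ?_)
  show C1.2 (liftPerm σ m) = C1.2 m
  rcases m.eq_zero_or_eq_succ with h | ⟨m', rfl⟩
  · rw [h, liftPerm_zero]
  · rw [liftPerm_succ]
    simp [C1, Fin.succ_ne_zero]


def B1 : Cls 8 := (1, fun i => if i = 1 then 1 else 0)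
def B2 : Cls 8 := (2, fun i => if i = 1 ∨ i = 2 ∨ i = 3 ∨ i = 4 then 1 else 0)
def B3 : Cls 8 := (3, fun i => if i = 1 then 2 else if i = 7 ∨ i = 0 then 0 else 1)

/-- canonical second conic for each intersection value -/
def Bv (nv : ℤ) : Cls 8 := if nv = 0 then C1 else if nv = 1 then B1 else if nv = 2 then B2 else B3

lemma isConic_B1 : IsConic B1 := by constructor <;> decide
lemma isConic_B2 : IsConic B2 := by constructor <;> decide
lemma isConic_B3 : IsConic B3 := by constructor <;> decide


lemma norm_pair_aux (nv : ℤ) (hnv : nv = 1 ∨ nv = 2 ∨ nv = 3) :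
    ∀ (n : ℕ) (Q : Cls 8), IsConic Q → ip C1 Q = nv → Q.1.toNat = n →
    ∃ g : Cls 8 ≃ₗ[ℤ] Cls 8, IsWeyl g ∧ g C1 = C1 ∧ g Q = Bv nv := by
  intro n
  induction n using Nat.strong_induction_on with
  | _ n IH =>
  intro Q hQ hip hn
  have ha := conic_a_pos hQ
  have hsum := conic_sum hQ
  have hsq := conic_sumsq hQ
  have hb0 : Q.2 0 = Q.1 - nv := by have := ip_C1 Q; omega
  by_cases hdesc : ∃ i j : Fin 7, i ≠ j ∧ nv + 1 ≤ Q.2 i.succ + Q.2 j.succ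
  · obtain ⟨i, j, hij, hbig⟩ := hdesc
    have h0i : (0 : Fin 8) ≠ i.succ := (Fin.succ_ne_zero i).symm
    have h0j : (0 : Fin 8) ≠ j.succ := (Fin.succ_ne_zero j).symm
    have hij' : i.succ ≠ j.succ := fun h => hij (Fin.succ_injective _ h)
    have hrr := root3_self h0i h0j hij'
    have hKr := root3_K h0i h0j hij'
    have hQr := root3_ip Q h0i h0j hij'
    have hC1r : ip C1 (root3 0 i.succ j.succ) = 0 := by
      rw [root3_ip C1 h0i h0j hij']
      show (1:ℤ) - (C1.2 0 + C1.2 i.succ + C1.2 j.succ) = 0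
      norm_num [C1, Fin.succ_ne_zero]
    set g1 := reflEquiv (root3 0 i.succ j.succ) hrr with hg1
    have hw1 := isWeyl_reflEquiv _ hrr hKr
    have hfix : g1 C1 = C1 := by
      show C1 + ip C1 _ • _ = C1
      rw [hC1r, zero_smul, add_zero]
    have hQ' : IsConic (g1 Q) := isConic_map hw1 hQ
    have hip' : ip C1 (g1 Q) = nv := by
      have h := hw1.1 C1 Q
      rw [hfix] at h
      rw [h, hip]
    have hfst : (g1 Q).1 = Q.1 + ip Q (root3 0 i.succ j.succ) := by
      show (Q + ip Q (root3 0 i.succ j.succ) • root3 0 i.succ j.succ).1 = _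
      simp [root3, Prod.fst_add, Prod.smul_fst, smul_eq_mul]
    have hlt : (g1 Q).1 < Q.1 := by rw [hfst, hQr]; omega
    have hpos := conic_a_pos hQ'
    obtain ⟨g2, hw2, hfix2, hg2⟩ := IH (g1 Q).1.toNat (by omega) (g1 Q) hQ' hip' rfl
    exact ⟨g1.trans g2, isWeyl_trans hw1 hw2,
      by rw [LinearEquiv.trans_apply, hfix, hfix2],
      by rw [LinearEquiv.trans_apply, hg2]⟩
  · push_neg at hdesc
    have tnn : ∀ i : Fin 7, 0 ≤ Q.2 i.succ := fun i => conic_b_nonneg hQ _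
    have tle : ∀ i : Fin 7, Q.2 i.succ ≤ nv := by
      intro i
      by_cases hi : i = 0
      · subst hi
        have h := hdesc 0 1 (by decide)
        have := tnn 1
        omega
      · have h := hdesc i 0 hi
        have := tnn 0
        omega
    have hsplit : Q.2 0 + ∑ i : Fin 7, Q.2 i.succ = ∑ m, Q.2 m :=
      (Fin.sum_univ_succ Q.2).symm
    have hsplit2 : Q.2 0 * Q.2 0 + ∑ i : Fin 7, Q.2 i.succ * Q.2 i.succ
        = ∑ m, Q.2 m * Q.2 m := (Fin.sum_univ_succ (fun m => Q.2 m * Q.2 m)).symm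
    have tsum : ∑ i : Fin 7, Q.2 i.succ = 2 * Q.1 - 2 + nv := by omega
    have tsq : ∑ i : Fin 7, Q.2 i.succ * Q.2 i.succ = Q.1 * Q.1 - Q.2 0 * Q.2 0 := by omega
    rcases hnv with hv | hv | hv <;> subst hv
    · -- nv = 1
      have hne : ∑ i : Fin 7, Q.2 i.succ ≠ 0 := by rw [tsum]; omega
      obtain ⟨i, -, hi⟩ := Finset.exists_ne_zero_of_sum_ne_zero hne
      have hi1 : Q.2 i.succ = 1 := by have := tnn i; have := tle i; omega
      have hz : ∀ j : Fin 7, j ≠ i → Q.2 j.succ = 0 := by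
        intro j hj
        have h := hdesc j i hj
        have := tnn j
        omega
      have hStot : ∑ i' : Fin 7, Q.2 i'.succ = 1 := by
        rw [Finset.sum_eq_single_of_mem i (Finset.mem_univ i) (fun b _ hb => hz b hb), hi1]
      have ha1 : Q.1 = 1 := by omega
      have hb00 : Q.2 0 = 0 := by omega
      refine ⟨permEquiv (liftPerm (Equiv.swap 0 i)), isWeyl_permEquiv _,
        permEquiv_lift_C1 _, ?_⟩
      have hBv : Bv 1 = B1 := by norm_num [Bv]
      rw [hBv]
      refine Prod.ext (show Q.1 = B1.1 by rw [ha1]; rfl) (funext fun m => ?_)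
      show Q.2 (liftPerm _ m) = B1.2 m
      rcases m.eq_zero_or_eq_succ with h | ⟨m', rfl⟩
      · rw [h, liftPerm_zero, hb00]; decide
      · rw [liftPerm_succ]
        by_cases hm : m' = 0
        · subst hm
          rw [Equiv.swap_apply_left, hi1]
          decide
        · have hσ : Equiv.swap 0 i m' ≠ i := fun hc =>
            hm ((Equiv.swap 0 i).injective (by rw [hc, Equiv.swap_apply_left]))
          rw [hz _ hσ]
          have hms : m'.succ ≠ (1 : Fin 8) := by
            intro hc
            apply hm
            have h1 : (1 : Fin 8) = (0 : Fin 7).succ := by decide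
            exact Fin.succ_injective _ (hc.trans h1)
          simp [B1, hms]
    · -- nv = 2
      by_cases h2e : ∃ i : Fin 7, Q.2 i.succ = 2
      · exfalso
        obtain ⟨i, hi2⟩ := h2e
        have hz : ∀ j : Fin 7, j ≠ i → Q.2 j.succ = 0 := by
          intro j hj
          have h := hdesc j i hj
          have := tnn j
          omega
        have hStot : ∑ i' : Fin 7, Q.2 i'.succ = 2 := by
          rw [Finset.sum_eq_single_of_mem i (Finset.mem_univ i) (fun b _ hb => hz b hb), hi2]
        have := conic_b_nonneg hQ 0
        omega
      · push_neg at h2e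
        have t01 : ∀ i : Fin 7, Q.2 i.succ = 0 ∨ Q.2 i.succ = 1 := by
          intro i
          have := tnn i
          have := tle i
          have := h2e i
          omega
        have heq : ∑ i : Fin 7, Q.2 i.succ * Q.2 i.succ = ∑ i : Fin 7, Q.2 i.succ :=
          Finset.sum_congr rfl (fun i _ => by rcases t01 i with h | h <;> rw [h] <;> ring)
        have hq : Q.1 * Q.1 - Q.2 0 * Q.2 0 = 4 * Q.1 - 4 := by rw [hb0]; ring
        have ha2 : Q.1 = 2 := by omega
        have hb00 : Q.2 0 = 0 := by omega
        have hS4 : ∑ i : Fin 7, Q.2 i.succ = 4 := by omega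
        classical
        set S := Finset.univ.filter (fun i : Fin 7 => Q.2 i.succ = 1) with hSdef
        have hcard : (S.card : ℤ) = 4 := by
          have hb : ∑ i : Fin 7, (if Q.2 i.succ = 1 then (1:ℤ) else 0)
              = ∑ i : Fin 7, Q.2 i.succ :=
            Finset.sum_congr rfl fun i _ => by rcases t01 i with h | h <;> simp [h]
          rw [hSdef, ← Finset.sum_boole, hb, hS4]
        have hc4 : S.card = 4 := by exact_mod_cast hcard
        have hT : ({0,1,2,3} : Finset (Fin 7)).card = 4 := by decide
        obtain ⟨σ, hσ⟩ := exists_perm_finset S {0,1,2,3} (hT.trans hc4.symm)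
        refine ⟨permEquiv (liftPerm σ), isWeyl_permEquiv _, permEquiv_lift_C1 _, ?_⟩
        have hBv : Bv 2 = B2 := by norm_num [Bv]
        rw [hBv]
        refine Prod.ext (show Q.1 = B2.1 by rw [ha2]; rfl) (funext fun m => ?_)
        show Q.2 (liftPerm σ m) = B2.2 m
        rcases m.eq_zero_or_eq_succ with h | ⟨m', rfl⟩
        · rw [h, liftPerm_zero, hb00]; decide
        · rw [liftPerm_succ]
          have hmem := hσ m'
          have hB : ∀ m'' : Fin 7, B2.2 m''.succ
              = if m'' ∈ ({0,1,2,3} : Finset (Fin 7)) then (1:ℤ) else 0 := by decide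
          rw [hB]
          by_cases hm : m' ∈ ({0,1,2,3} : Finset (Fin 7))
          · rw [if_pos hm]
            have hin : σ m' ∈ S := hmem.mpr hm
            rw [hSdef] at hin
            exact (Finset.mem_filter.mp hin).2
          · rw [if_neg hm]
            have hns : σ m' ∉ S := fun hc => hm (hmem.mp hc)
            rcases t01 (σ m') with h | h
            · exact h
            · exact absurd (show σ m' ∈ S by
                rw [hSdef]
                exact Finset.mem_filter.mpr ⟨Finset.mem_univ (σ m'), h⟩) hns
    · -- nv = 3
      have ha3 : 3 ≤ Q.1 := by have := conic_b_nonneg hQ 0; omega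
      by_cases h3e : ∃ i : Fin 7, Q.2 i.succ = 3
      · exfalso
        obtain ⟨i, hi3⟩ := h3e
        have hz : ∀ j : Fin 7, j ≠ i → Q.2 j.succ = 0 := by
          intro j hj
          have h := hdesc j i hj
          have := tnn j
          omega
        have hStot : ∑ i' : Fin 7, Q.2 i'.succ = 3 := by
          rw [Finset.sum_eq_single_of_mem i (Finset.mem_univ i) (fun b _ hb => hz b hb), hi3]
        omega
      · push_neg at h3e
        have hq : Q.1 * Q.1 - Q.2 0 * Q.2 0 = 6 * Q.1 - 9 := by rw [hb0]; ring
        by_cases h2e : ∃ i : Fin 7, Q.2 i.succ = 2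
        · obtain ⟨i, hi2⟩ := h2e
          have t01 : ∀ j : Fin 7, j ≠ i → (Q.2 j.succ = 0 ∨ Q.2 j.succ = 1) := by
            intro j hj
            have h := hdesc j i hj
            have := tnn j
            omega
          have he1 : Q.2 i.succ + ∑ j ∈ Finset.univ.erase i, Q.2 j.succ
              = ∑ j : Fin 7, Q.2 j.succ :=
            Finset.add_sum_erase _ (fun j : Fin 7 => Q.2 j.succ) (Finset.mem_univ i)
          have he2 : Q.2 i.succ * Q.2 i.succ
              + ∑ j ∈ Finset.univ.erase i, Q.2 j.succ * Q.2 j.succ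
              = ∑ j : Fin 7, Q.2 j.succ * Q.2 j.succ :=
            Finset.add_sum_erase _ (fun j : Fin 7 => Q.2 j.succ * Q.2 j.succ)
              (Finset.mem_univ i)
          have heq : ∑ j ∈ Finset.univ.erase i, Q.2 j.succ * Q.2 j.succ
              = ∑ j ∈ Finset.univ.erase i, Q.2 j.succ :=
            Finset.sum_congr rfl (fun j hj => by
              rcases t01 j (Finset.mem_erase.mp hj).1 with h | h <;> rw [h] <;> ring)
          have hti : Q.2 i.succ * Q.2 i.succ = 4 := by rw [hi2]; norm_num
          have ha' : Q.1 = 3 := by omega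
          have hb00 : Q.2 0 = 0 := by omega
          have hSe : ∑ j ∈ Finset.univ.erase i, Q.2 j.succ = 5 := by omega
          have hcarde : (Finset.univ.erase i).card = 6 := by
            rw [Finset.card_erase_of_mem (Finset.mem_univ i)]
            simp
          have hsub : ∑ j ∈ Finset.univ.erase i, (1 - Q.2 j.succ) = 1 := by
            rw [Finset.sum_sub_distrib, Finset.sum_const, hcarde, hSe]
            norm_num
          obtain ⟨z, hzmem, hz0'⟩ := Finset.exists_ne_zero_of_sum_ne_zero
            (by rw [hsub]; norm_num : ∑ j ∈ Finset.univ.erase i, (1 - Q.2 j.succ) ≠ 0)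
          have hzi : z ≠ i := (Finset.mem_erase.mp hzmem).1
          have hz0 : Q.2 z.succ = 0 := by
            rcases t01 z hzi with h | h
            · exact h
            · rw [h] at hz0'; norm_num at hz0'
          have he3 : (1 - Q.2 z.succ) + ∑ j ∈ (Finset.univ.erase i).erase z, (1 - Q.2 j.succ)
              = ∑ j ∈ Finset.univ.erase i, (1 - Q.2 j.succ) :=
            Finset.add_sum_erase _ (fun j : Fin 7 => 1 - Q.2 j.succ) hzmem
          have hzero : ∀ j ∈ (Finset.univ.erase i).erase z, 1 - Q.2 j.succ = 0 := by
            rw [← Finset.sum_eq_zero_iff_of_nonneg (fun j hj => by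
              have := t01 j (Finset.mem_erase.mp (Finset.mem_erase.mp hj).2).1
              omega)]
            omega
          have hone : ∀ y : Fin 7, y ≠ i → y ≠ z → Q.2 y.succ = 1 := by
            intro y hyi hyz
            have hy : y ∈ (Finset.univ.erase i).erase z :=
              Finset.mem_erase.mpr ⟨hyz, Finset.mem_erase.mpr ⟨hyi, Finset.mem_univ y⟩⟩
            have := hzero y hy
            omega
          set z' := Equiv.swap (0 : Fin 7) i z with hz'def
          have hz'0 : z' ≠ 0 := by
            intro hc
            apply hzi
            apply (Equiv.swap (0 : Fin 7) i).injective
            rw [Equiv.swap_apply_right]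
            exact hc
          have hz'6 : True := trivial
          set σ := (Equiv.swap (6 : Fin 7) z').trans (Equiv.swap (0 : Fin 7) i) with hσdef
          have hσ0 : σ 0 = i := by
            show Equiv.swap (0:Fin 7) i (Equiv.swap (6:Fin 7) z' 0) = i
            rw [Equiv.swap_apply_of_ne_of_ne (by decide) (Ne.symm hz'0),
              Equiv.swap_apply_left]
          have hσ6 : σ 6 = z := by
            show Equiv.swap (0:Fin 7) i (Equiv.swap (6:Fin 7) z' 6) = z
            rw [Equiv.swap_apply_left, hz'def, Equiv.swap_apply_self]
          refine ⟨permEquiv (liftPerm σ), isWeyl_permEquiv _, permEquiv_lift_C1 _, ?_⟩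
          have hBv : Bv 3 = B3 := by norm_num [Bv]
          rw [hBv]
          refine Prod.ext (show Q.1 = B3.1 by rw [ha']; rfl) (funext fun m => ?_)
          show Q.2 (liftPerm σ m) = B3.2 m
          rcases m.eq_zero_or_eq_succ with h | ⟨m', rfl⟩
          · rw [h, liftPerm_zero, hb00]; decide
          · rw [liftPerm_succ]
            have hB : ∀ m'' : Fin 7, B3.2 m''.succ
                = if m'' = 0 then 2 else if m'' = 6 then (0:ℤ) else 1 := by decide
            rw [hB]
            by_cases hm0 : m' = 0
            · subst hm0
              rw [if_pos rfl, hσ0, hi2]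
            · rw [if_neg hm0]
              by_cases hm6 : m' = 6
              · subst hm6
                rw [if_pos rfl, hσ6, hz0]
              · rw [if_neg hm6]
                have h1 : σ m' ≠ i := fun hc => hm0 (σ.injective (hc.trans hσ0.symm))
                have h2 : σ m' ≠ z := fun hc => hm6 (σ.injective (hc.trans hσ6.symm))
                exact hone _ h1 h2
        · push_neg at h2e
          exfalso
          have t01 : ∀ i : Fin 7, Q.2 i.succ = 0 ∨ Q.2 i.succ = 1 := by
            intro i
            have := tnn i
            have := tle i
            have := h2e i
            have := h3e i
            omega
          have heq : ∑ i : Fin 7, Q.2 i.succ * Q.2 i.succ = ∑ i : Fin 7, Q.2 i.succ :=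
            Finset.sum_congr rfl (fun i _ => by rcases t01 i with h | h <;> rw [h] <;> ring)
          omega


/-- the conjugate conic `-4K - Q` -/
def star (Q : Cls 8) : Cls 8 := (-4 : ℤ) • Kcls 8 - Q

lemma isConic_star {Q : Cls 8} (hQ : IsConic Q) : IsConic (star Q) := by
  have hQK : ip Q (Kcls 8) = -2 := by rw [ip_comm]; exact hQ.2
  constructor
  · show ip ((-4 : ℤ) • Kcls 8 - Q) ((-4 : ℤ) • Kcls 8 - Q) = 0
    simp only [ip_sub_left, ip_sub_right, ip_smul_left, ip_smul_right, ipKK, hQK,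
      hQ.2, hQ.1]
    ring
  · show ip (Kcls 8) ((-4 : ℤ) • Kcls 8 - Q) = -2
    rw [ip_sub_right, ip_smul_right, ipKK, hQ.2]
    ring

lemma ip_star {P Q : Cls 8} (hP : IsConic P) : ip P (star Q) = 8 - ip P Q := by
  have hPK : ip P (Kcls 8) = -2 := by rw [ip_comm]; exact hP.2
  show ip P ((-4 : ℤ) • Kcls 8 - Q) = _
  rw [ip_sub_right, ip_smul_right, hPK]
  ring

lemma star_star (Q : Cls 8) : star (star Q) = Q := sub_sub_cancel _ _

lemma map_star {g : Cls 8 ≃ₗ[ℤ] Cls 8} (hg : IsWeyl g) (Q : Cls 8) :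
    g (star Q) = star (g Q) := by
  show g ((-4 : ℤ) • Kcls 8 - Q) = (-4 : ℤ) • Kcls 8 - g Q
  rw [map_sub, map_smul, hg.2]

lemma norm_pair (Q1 Q2 : Cls 8) (h1 : IsConic Q1) (h2 : IsConic Q2)
    (hle : ip Q1 Q2 ≤ 3) :
    ∃ g : Cls 8 ≃ₗ[ℤ] Cls 8, IsWeyl g ∧ g Q1 = C1 ∧ g Q2 = Bv (ip Q1 Q2) := by
  obtain ⟨g1, hw1, hg1⟩ := norm_conic Q1 h1
  have hR : IsConic (g1 Q2) := isConic_map hw1 h2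
  have hipR : ip C1 (g1 Q2) = ip Q1 Q2 := by rw [← hg1, hw1.1]
  have h0 := pair_nonneg h1 h2
  rcases (show ip Q1 Q2 = 0 ∨ (ip Q1 Q2 = 1 ∨ ip Q1 Q2 = 2 ∨ ip Q1 Q2 = 3) by omega)
    with hv | hv
  · have hc : C1 = g1 Q2 := pair_eq_zero isConic_C1 hR (by rw [hipR, hv])
    refine ⟨g1, hw1, hg1, ?_⟩
    rw [← hc, hv]
    norm_num [Bv]
  · obtain ⟨g2, hw2, hfix, hg2⟩ := norm_pair_aux (ip Q1 Q2) hv (g1 Q2).1.toNat (g1 Q2)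
      hR hipR rfl
    exact ⟨g1.trans g2, isWeyl_trans hw1 hw2,
      by rw [LinearEquiv.trans_apply, hg1, hfix],
      by rw [LinearEquiv.trans_apply, hg2]⟩

lemma same_orbit_small (Q₁ Q₂ Q₁' Q₂' : Cls 8)
    (hQ₁ : IsConic Q₁) (hQ₂ : IsConic Q₂) (hQ₁' : IsConic Q₁') (hQ₂' : IsConic Q₂')
    (h : ip Q₁ Q₂ = ip Q₁' Q₂') (hle : ip Q₁ Q₂ ≤ 3) :
    ∃ g : Cls 8 ≃ₗ[ℤ] Cls 8, IsWeyl g ∧ g Q₁ = Q₁' ∧ g Q₂ = Q₂' := by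
  obtain ⟨g, hw, hA, hB⟩ := norm_pair Q₁ Q₂ hQ₁ hQ₂ hle
  obtain ⟨g', hw', hA', hB'⟩ := norm_pair Q₁' Q₂' hQ₁' hQ₂' (h ▸ hle)
  refine ⟨g.trans g'.symm, isWeyl_trans hw (isWeyl_symm hw'), ?_, ?_⟩
  · rw [LinearEquiv.trans_apply, hA, LinearEquiv.symm_apply_eq, hA']
  · rw [LinearEquiv.trans_apply, hB, LinearEquiv.symm_apply_eq, hB', h]

end DP

/-- For δ = 8, two ordered pairs of conic classes with the same intersection
product different from 4 lie in the same Weyl-group orbit. -/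
theorem stmt6 (Q₁ Q₂ Q₁' Q₂' : Cls 8)
    (hQ₁ : IsConic Q₁) (hQ₂ : IsConic Q₂) (hQ₁' : IsConic Q₁') (hQ₂' : IsConic Q₂')
    (h : ip Q₁ Q₂ = ip Q₁' Q₂') (h4 : ip Q₁ Q₂ ≠ 4) :
    ∃ g : Cls 8 ≃ₗ[ℤ] Cls 8, IsWeyl g ∧ g Q₁ = Q₁' ∧ g Q₂ = Q₂' := by
  have h8 := DP.pair_le_eight hQ₁ hQ₂
  rcases le_or_gt (ip Q₁ Q₂) 3 with hle | hgt
  · exact DP.same_orbit_small Q₁ Q₂ Q₁' Q₂' hQ₁ hQ₂ hQ₁' hQ₂' h hle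
  · have hs2 := DP.isConic_star hQ₂
    have hs2' := DP.isConic_star hQ₂'
    have hips : ip Q₁ (DP.star Q₂) = 8 - ip Q₁ Q₂ := DP.ip_star hQ₁
    have hips' : ip Q₁' (DP.star Q₂') = 8 - ip Q₁' Q₂' := DP.ip_star hQ₁'
    obtain ⟨g, hw, hA, hB⟩ := DP.same_orbit_small Q₁ (DP.star Q₂) Q₁' (DP.star Q₂')
      hQ₁ hs2 hQ₁' hs2' (by rw [hips, hips', h]) (by rw [hips]; omega)
    refine ⟨g, hw, hA, ?_⟩
    calc g Q₂ = g (DP.star (DP.star Q₂)) := by rw [DP.star_star]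
      _ = DP.star (g (DP.star Q₂)) := DP.map_star hw _
      _ = DP.star (DP.star Q₂') := by rw [hB]
      _ = Q₂' := DP.star_star _
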